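/- (Average minimum rank distance of random codes) Let q be a prime power and 0 < α < 1 a fixed real. For each n ≥ 2, let m(n) ≥ n be an integer and N(n) ≥ 2 an integer with 3·log_q(n)·q^{m(n)+n} ≤ N(n) ≤ q^{α·m(n)·n}. Define p_i^{(n)} = (1 − B_{i−1}/q^{m(n)n})^{N(n)} − (1 − B_i/q^{m(n)n})^{N(n)} for 1 ≤ i ≤ n, E_n = Σ_{i=1}^n i·p_i^{(n)}, and 𝓜_n = (m(n)+n)/2 − √((m(n)−n)²/4 + log_q N(n)). Then there exist a constant C > 0 and an integer n₀ such that |E_n − 𝓜_n| ≤ C for all n ≥ n₀. -/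

import Mathlib

open scoped BigOperators

set_option linter.unusedSectionVars false
set_option maxHeartbeats 16000000

/-- Number of `m × n` matrices over `F` of rank at most `t`. -/
noncomputable def ballCount (F : Type*) [Field F] [Fintype F] (m n t : ℕ) : ℕ :=
  Nat.card {A : Matrix (Fin m) (Fin n) F // A.rank ≤ t}

open Matrix

section Support


open Matrix

lemma exists_li_containing {F E : Type*} [Field F] [AddCommGroup E] [Module F E]
    [FiniteDimensional F E] {j : ℕ} (hj : j ≤ Module.finrank F E) :
    ∀ V : Submodule F E, Module.finrank F V ≤ j →
    ∃ r : Fin j → E, LinearIndependent F r ∧ V ≤ Submodule.span F (Set.range r) := by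
  suffices H : ∀ d : ℕ, ∀ V : Submodule F E, Module.finrank F V ≤ j →
      j - Module.finrank F V = d →
      ∃ r : Fin j → E, LinearIndependent F r ∧ V ≤ Submodule.span F (Set.range r) by
    intro V hV
    exact H _ V hV rfl
  intro d
  induction d with
  | zero =>
    intro V hV hd
    have hVe : Module.finrank F V = j := by omega
    let b := Module.finBasis F V
    have hcast : Module.finrank F V = j := hVe
    refine ⟨fun i => (b (Fin.cast hcast.symm i) : E), ?_, ?_⟩
    · have h1 : LinearIndependent F (fun i => (b i : E)) := by
        have := b.linearIndependent.map' V.subtype (Submodule.ker_subtype V)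
        exact this
      exact h1.comp _ (fun a b => by
        intro h; exact (Fin.cast_injective _) h)
    · have : Set.range (fun i => (b (Fin.cast hcast.symm i) : E)) =
          V.subtype '' (Set.range b) := by
        ext x
        constructor
        · rintro ⟨i, rfl⟩; exact ⟨b (Fin.cast hcast.symm i), ⟨_, rfl⟩, rfl⟩
        · rintro ⟨y, ⟨i, rfl⟩, rfl⟩; exact ⟨Fin.cast hcast i, by simp⟩
      rw [this, ← Submodule.map_span, b.span_eq, Submodule.map_top,
        Submodule.range_subtype]
  | succ d ih =>
    intro V hV hd
    have hVlt : Module.finrank F V < j := by omega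
    have hVne : V ≠ ⊤ := by
      intro h
      rw [h, finrank_top] at hVlt
      omega
    obtain ⟨x, hx⟩ : ∃ x, x ∉ V := by
      by_contra h
      push_neg at h
      exact hVne (Submodule.eq_top_iff'.2 h)
    let V' := V ⊔ (Submodule.span F {x})
    have hV' : V' = V ⊔ (Submodule.span F {x}) := rfl
    have hxne : x ≠ 0 := fun h => hx (h ▸ V.zero_mem)
    have hle : Module.finrank F ↥(V ⊔ Submodule.span F {x}) ≤ Module.finrank F V + 1 := by
      have h1 := Submodule.finrank_sup_add_finrank_inf_eq V (Submodule.span F {x})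
      have h2 : Module.finrank F ↥(Submodule.span F {x}) = 1 :=
        finrank_span_singleton hxne
      omega
    have hlt : V < V ⊔ Submodule.span F {x} := by
      refine lt_of_le_of_ne le_sup_left ?_
      intro h
      exact hx (h ▸ (le_sup_right (a := V)) (Submodule.mem_span_singleton_self x))
    have hgt : Module.finrank F V < Module.finrank F ↥(V ⊔ Submodule.span F {x}) :=
      Submodule.finrank_lt_finrank_of_lt hlt
    obtain ⟨r, hr, hVr⟩ := ih (V ⊔ Submodule.span F {x}) (by omega) (by omega)
    exact ⟨r, hr, le_trans (le_of_lt hlt) hVr⟩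

variable {F : Type*} [Field F] [Fintype F]


lemma card_matrix (a b : ℕ) :
    Nat.card (Matrix (Fin a) (Fin b) F) = Fintype.card F ^ (a * b) := by
  rw [Nat.card_eq_fintype_card]
  show Fintype.card (Fin a → Fin b → F) = _
  simp only [Fintype.card_fun, Fintype.card_fin, ← pow_mul]
  rw [mul_comm]

lemma ballCount_lower (m n j : ℕ) (hjm : j ≤ m) (hjn : j ≤ n) :
    (∏ i : Fin j, (Fintype.card F ^ m - Fintype.card F ^ (i : ℕ))) *
      Fintype.card F ^ (j * (n - j)) ≤ ballCount F m n j := by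
  classical
  set D := {s : Fin j → (Fin m → F) // LinearIndependent F s} ×
    Matrix (Fin j) (Fin (n - j)) F with hD
  have hcard : Nat.card D =
      (∏ i : Fin j, (Fintype.card F ^ m - Fintype.card F ^ (i : ℕ))) *
        Fintype.card F ^ (j * (n - j)) := by
    rw [hD, Nat.card_prod, card_matrix]
    congr 1
    rw [card_linearIndependent (by simp [Module.finrank_fintype_fun_eq_card, hjm])]
    simp [Module.finrank_fintype_fun_eq_card]
  -- the injection
  let C : D → Matrix (Fin m) (Fin j) F := fun p => Matrix.of fun a i => p.1.1 i a
  let R : D → Matrix (Fin j) (Fin n) F := fun p => Matrix.of fun i l =>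
    if h : (l : ℕ) < j then (if i = ⟨(l : ℕ), h⟩ then 1 else 0)
    else p.2 i ⟨(l : ℕ) - j, by omega⟩
  let Φ : D → {A : Matrix (Fin m) (Fin n) F // A.rank ≤ j} := fun p =>
    ⟨C p * R p, le_trans (rank_mul_le_left _ _) (rank_le_width _)⟩
  have hent : ∀ p : D, ∀ a : Fin m, ∀ l : Fin n,
      (C p * R p) a l = if h : (l : ℕ) < j then p.1.1 ⟨(l : ℕ), h⟩ a
        else ∑ i : Fin j, p.1.1 i a * p.2 i ⟨(l : ℕ) - j, by omega⟩ := by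
    intro p a l
    by_cases h : (l : ℕ) < j
    · rw [Matrix.mul_apply]
      simp only [R, C, Matrix.of_apply, dif_pos h, mul_ite, mul_one, mul_zero]
      rw [Finset.sum_ite_eq' Finset.univ (⟨(l : ℕ), h⟩ : Fin j) (fun i => p.1.1 i a)]
      simp
    · simp [Matrix.mul_apply, R, C, dif_neg h]
  have hinj : Function.Injective Φ := by
    intro p p' hpp
    have hM : C p * R p = C p' * R p' := congrArg Subtype.val hpp
    have hs : p.1 = p'.1 := by
      apply Subtype.ext; funext i a
      have h0 := congrFun (congrFun hM a) ⟨(i : ℕ), lt_of_lt_of_le i.2 hjn⟩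
      rw [hent, hent] at h0
      simpa [i.2] using h0
    have hS : p.2 = p'.2 := by
      funext i k
      have hli : j + (k : ℕ) < n := by omega
      have key : ∀ a : Fin m,
          ∑ i : Fin j, (p.2 i k - p'.2 i k) * p'.1.1 i a = 0 := by
        intro a
        have h1 := congrFun (congrFun hM a) (⟨j + (k : ℕ), hli⟩ : Fin n)
        rw [hent, hent] at h1
        rw [dif_neg (by simp), dif_neg (by simp)] at h1
        simp only [show j + (k : ℕ) - j = (k : ℕ) from by omega, Fin.eta] at h1
        rw [hs] at h1
        calc ∑ i : Fin j, (p.2 i k - p'.2 i k) * p'.1.1 i a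
            = (∑ i : Fin j, p'.1.1 i a * p.2 i k) -
              ∑ i : Fin j, p'.1.1 i a * p'.2 i k := by
              rw [← Finset.sum_sub_distrib]
              apply Finset.sum_congr rfl; intros; ring
          _ = 0 := by rw [h1]; ring
      have hli2 := p'.1.2
      rw [linearIndependent_iff'] at hli2
      have hzero := hli2 Finset.univ (fun i => p.2 i k - p'.2 i k) ?_
      · have := hzero i (Finset.mem_univ i)
        exact sub_eq_zero.mp this
      · funext a
        have := key a
        simpa [Finset.sum_apply, Pi.smul_apply, smul_eq_mul] using this
    rw [Prod.ext_iff]; exact ⟨hs, hS⟩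
  calc (∏ i : Fin j, (Fintype.card F ^ m - Fintype.card F ^ (i : ℕ))) *
      Fintype.card F ^ (j * (n - j)) = Nat.card D := hcard.symm
    _ ≤ ballCount F m n j := Nat.card_le_card_of_injective Φ hinj


omit [Fintype F] in
lemma sum_smul_eq_vecMul {j n : ℕ} (g : Fin j → F) (r : Fin j → Fin n → F) :
    ∑ i : Fin j, g i • r i = Matrix.vecMul g (Matrix.of r) := by
  funext l
  simp [Matrix.vecMul, dotProduct, Finset.sum_apply]

omit [Fintype F] in
lemma li_rows_mul {j n : ℕ} (M : Matrix (Fin j) (Fin j) F) (hM : IsUnit M)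
    (r : Fin j → Fin n → F) (hr : LinearIndependent F r) :
    LinearIndependent F (fun i => (M * Matrix.of r) i) := by
  rw [Fintype.linearIndependent_iff]
  intro g hg i
  have hg' : Matrix.vecMul g (M * Matrix.of r) = 0 := by
    funext l
    have := congrFun hg l
    simpa [Matrix.vecMul, dotProduct, Finset.sum_apply,
      Finset.sum_comm (γ := Fin j)] using this
  have h1 : Matrix.vecMul (Matrix.vecMul g M) (Matrix.of r) = 0 := by
    rw [Matrix.vecMul_vecMul]; exact hg'
  have h2 : Matrix.vecMul g M = 0 := by
    have := Fintype.linearIndependent_iff.mp hr (Matrix.vecMul g M) ?_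
    · funext i'; exact this i'
    · rw [sum_smul_eq_vecMul]; exact h1
  obtain ⟨U, rfl⟩ := hM
  have h3 := congrArg (fun v => Matrix.vecMul v ((↑U⁻¹ : Matrix (Fin j) (Fin j) F))) h2
  simp only [Matrix.vecMul_vecMul, Matrix.zero_vecMul] at h3
  rw [Units.mul_inv, Matrix.vecMul_one] at h3
  exact congrFun h3 i


omit [Fintype F] in
lemma exists_factorization {m n j : ℕ} (hjn : j ≤ n) (A : Matrix (Fin m) (Fin n) F)
    (hA : A.rank ≤ j) :
    ∃ r : Fin j → (Fin n → F), LinearIndependent F r ∧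
      ∃ Cm : Matrix (Fin m) (Fin j) F, A = Cm * Matrix.of r := by
  classical
  have hrow : Module.finrank F (Submodule.span F (Set.range (fun a : Fin m => A a))) ≤ j := by
    have h1 : Aᵀ.rank = Module.finrank F (Submodule.span F (Set.range Aᵀᵀ)) :=
      rank_eq_finrank_span_cols Aᵀ
    rw [transpose_transpose, rank_transpose] at h1
    rw [show Set.range A = Set.range (fun a : Fin m => A a) from rfl] at h1
    omega
  obtain ⟨r, hli, hsub⟩ := exists_li_containing
    (E := Fin n → F) (by simp [Module.finrank_fintype_fun_eq_card, hjn]) _ hrow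
  refine ⟨r, hli, ?_⟩
  have hmem : ∀ a : Fin m, ∃ c : Fin j → F, ∑ i, c i • r i = A a := by
    intro a
    exact (Submodule.mem_span_range_iff_exists_fun F).mp
      (hsub (Submodule.subset_span ⟨a, rfl⟩))
  choose c hc using hmem
  refine ⟨Matrix.of c, ?_⟩
  ext a l
  rw [Matrix.mul_apply]
  have := congrFun (hc a) l
  simp only [Finset.sum_apply, Pi.smul_apply, smul_eq_mul] at this
  rw [← this]
  rfl

lemma ballCount_upper (m n j : ℕ) (hjn : j ≤ n) :
    (Nat.card {A : Matrix (Fin m) (Fin n) F // A.rank ≤ j}) *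
      ∏ i : Fin j, (Fintype.card F ^ j - Fintype.card F ^ (i : ℕ)) ≤
    Fintype.card F ^ (m * j) * Fintype.card F ^ (n * j) := by
  classical
  have hfac := fun (A : {A : Matrix (Fin m) (Fin n) F // A.rank ≤ j}) =>
    exists_factorization hjn A.1 A.2
  choose rA hrA CA hCA using hfac
  let Ψ : {A : Matrix (Fin m) (Fin n) F // A.rank ≤ j} × GL (Fin j) F →
      Matrix (Fin m) (Fin j) F × {s : Fin j → (Fin n → F) // LinearIndependent F s} :=
    fun p => ⟨CA p.1 * (p.2 : Matrix (Fin j) (Fin j) F),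
      ⟨fun i => ((↑p.2⁻¹ : Matrix (Fin j) (Fin j) F) * Matrix.of (rA p.1)) i,
        li_rows_mul _ (p.2⁻¹).isUnit _ (hrA p.1)⟩⟩
  have hinj : Function.Injective Ψ := by
    intro p p' h
    obtain ⟨h1, h2⟩ := Prod.ext_iff.mp h
    simp only [Ψ] at h1 h2
    have h2' : (↑p.2⁻¹ : Matrix (Fin j) (Fin j) F) * Matrix.of (rA p.1) =
        (↑p'.2⁻¹ : Matrix (Fin j) (Fin j) F) * Matrix.of (rA p'.1) := by
      have := congrArg Subtype.val h2
      exact Matrix.ext fun i l => congrFun (congrFun this i) l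
    have hAA : p.1 = p'.1 := by
      apply Subtype.ext
      calc p.1.1 = CA p.1 * Matrix.of (rA p.1) := hCA p.1
        _ = (CA p.1 * (↑p.2 : Matrix (Fin j) (Fin j) F)) * ((↑p.2⁻¹ : Matrix (Fin j) (Fin j) F) * Matrix.of (rA p.1)) := by
            rw [Matrix.mul_assoc, ← Matrix.mul_assoc (↑p.2 : Matrix (Fin j) (Fin j) F),
              Units.mul_inv, Matrix.one_mul]
        _ = (CA p'.1 * (↑p'.2 : Matrix (Fin j) (Fin j) F)) * ((↑p'.2⁻¹ : Matrix (Fin j) (Fin j) F) * Matrix.of (rA p'.1)) := by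
            rw [h1, h2']
        _ = CA p'.1 * Matrix.of (rA p'.1) := by
            rw [Matrix.mul_assoc, ← Matrix.mul_assoc (↑p'.2 : Matrix (Fin j) (Fin j) F),
              Units.mul_inv, Matrix.one_mul]
        _ = p'.1.1 := (hCA p'.1).symm
    have hU : p.2 = p'.2 := by
      rw [← hAA] at h2'
      have h3 : ((↑p'.2 : Matrix (Fin j) (Fin j) F) * (↑p.2⁻¹ : Matrix (Fin j) (Fin j) F)) *
          Matrix.of (rA p.1) = Matrix.of (rA p.1) := by
        rw [Matrix.mul_assoc, h2', ← Matrix.mul_assoc, Units.mul_inv, Matrix.one_mul]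
      have h4 : ((↑p'.2 : Matrix (Fin j) (Fin j) F) * (↑p.2⁻¹ : Matrix (Fin j) (Fin j) F)) = 1 := by
        set M := ((↑p'.2 : Matrix (Fin j) (Fin j) F) * (↑p.2⁻¹ : Matrix (Fin j) (Fin j) F)) with hMdef
        ext k i
        have hrow := congrFun h3 k
        have hsum : ∑ i', (M k i' - (1 : Matrix (Fin j) (Fin j) F) k i') • rA p.1 i' = 0 := by
          rw [Finset.sum_congr rfl (fun i' _ => sub_smul (M k i') _ (rA p.1 i'))]
        
          rw [Finset.sum_sub_distrib]
          have e1 : ∑ i', M k i' • rA p.1 i' = (M * Matrix.of (rA p.1)) k := by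
            funext l; simp [Matrix.mul_apply, Finset.sum_apply]
          have e2 : ∑ i', (1 : Matrix (Fin j) (Fin j) F) k i' • rA p.1 i' = rA p.1 k := by
            funext l
            simp only [Finset.sum_apply, Pi.smul_apply, smul_eq_mul, Matrix.one_apply,
              ite_mul, one_mul, zero_mul]
            rw [Finset.sum_ite_eq Finset.univ k (fun i' => rA p.1 i' l)]
            simp
          rw [e1, e2, hrow]
          exact sub_eq_zero.mpr rfl
        have := Fintype.linearIndependent_iff.mp (hrA p.1) _ hsum i
        exact sub_eq_zero.mp this
      have h5 : (p'.2 * p.2⁻¹ : GL (Fin j) F) = 1 := by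
        apply Units.ext
        rw [Units.val_mul, Units.val_one]
        exact h4
      exact (mul_inv_eq_one.mp h5).symm
    rw [Prod.ext_iff]; exact ⟨hAA, hU⟩
  have hle := Nat.card_le_card_of_injective Ψ hinj
  rw [Nat.card_prod, Nat.card_prod] at hle
  rw [Matrix.card_GL_field] at hle
  have hLI : Nat.card {s : Fin j → (Fin n → F) // LinearIndependent F s} ≤
      Fintype.card F ^ (n * j) := by
    rw [card_linearIndependent (by simp [Module.finrank_fintype_fun_eq_card, hjn])]
    simp only [Module.finrank_fintype_fun_eq_card, Fintype.card_fin]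
    calc ∏ i : Fin j, (Fintype.card F ^ n - Fintype.card F ^ (i : ℕ))
        ≤ ∏ _i : Fin j, Fintype.card F ^ n :=
          Finset.prod_le_prod (fun _ _ => Nat.zero_le _) (fun _ _ => Nat.sub_le _ _)
      _ = Fintype.card F ^ (n * j) := by rw [Finset.prod_const, ← pow_mul, Finset.card_univ,
          Fintype.card_fin]
  have hMat : Nat.card (Matrix (Fin m) (Fin j) F) = Fintype.card F ^ (m * j) := by
    rw [Nat.card_eq_fintype_card]
    show Fintype.card (Fin m → Fin j → F) = _
    simp only [Fintype.card_fun, Fintype.card_fin, ← pow_mul]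
    rw [mul_comm]
  calc (Nat.card {A : Matrix (Fin m) (Fin n) F // A.rank ≤ j}) *
      ∏ i : Fin j, (Fintype.card F ^ j - Fintype.card F ^ (i : ℕ))
      ≤ Nat.card (Matrix (Fin m) (Fin j) F) *
        Nat.card {s : Fin j → (Fin n → F) // LinearIndependent F s} := hle
    _ ≤ Fintype.card F ^ (m * j) * Fintype.card F ^ (n * j) := by
        rw [hMat]; exact Nat.mul_le_mul_left _ hLI

lemma weierstrass (f : ℕ → ℝ) (h0 : ∀ i, 0 ≤ f i) (h1 : ∀ i, f i ≤ 1) (j : ℕ) :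
    1 - ∑ i ∈ Finset.range j, f i ≤ ∏ i ∈ Finset.range j, (1 - f i) := by
  induction j with
  | zero => simp
  | succ k ih =>
    rw [Finset.sum_range_succ, Finset.prod_range_succ]
    have hprod0 : (0:ℝ) ≤ ∏ i ∈ Finset.range k, (1 - f i) :=
      Finset.prod_nonneg (fun i _ => by linarith [h1 i])
    have hsum0 : (0:ℝ) ≤ ∑ i ∈ Finset.range k, f i :=
      Finset.sum_nonneg (fun i _ => h0 i)
    nlinarith [h0 k, h1 k, mul_nonneg hsum0 (h0 k)]

lemma mygeom_le {r : ℝ} (h0 : 0 ≤ r) (h2 : r ≤ 1/2) (j : ℕ) :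
    ∑ i ∈ Finset.range j, r ^ i ≤ 2 - 2 * r ^ j := by
  induction j with
  | zero => simp
  | succ k ih =>
    rw [Finset.sum_range_succ, pow_succ]
    nlinarith [pow_nonneg h0 k]

lemma subP {r : ℝ} (h0 : 0 ≤ r) (h2 : r ≤ 1/2) (j k : ℕ) (hjk : j + 1 ≤ k) :
    (1/2 : ℝ) ≤ ∏ i ∈ Finset.range j, (1 - r ^ (k - i)) := by
  have hsum : ∑ i ∈ Finset.range j, r ^ (k - i) ≤ 1/2 := by
    have hre : ∑ i ∈ Finset.range j, r ^ (k - i) =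
        ∑ i ∈ Finset.range j, r ^ ((k - j + 1) + i) := by
      rw [← Finset.sum_range_reflect]
      apply Finset.sum_congr rfl
      intro i hi
      simp only [Finset.mem_range] at hi
      congr 1
      omega
    rw [hre]
    have : ∑ i ∈ Finset.range j, r ^ ((k - j + 1) + i) =
        r ^ (k - j + 1) * ∑ i ∈ Finset.range j, r ^ i := by
      rw [Finset.mul_sum]
      exact Finset.sum_congr rfl (fun i _ => by rw [pow_add])
    rw [this]
    have h1 : ∑ i ∈ Finset.range j, r ^ i ≤ 2 := by
      have := mygeom_le h0 h2 j
      nlinarith [pow_nonneg h0 j]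
    have h2' : r ^ (k - j + 1) ≤ (1/2)^2 := by
      calc r ^ (k - j + 1) ≤ (1/2 : ℝ) ^ (k - j + 1) := pow_le_pow_left₀ h0 h2 _
        _ ≤ (1/2 : ℝ)^2 := pow_le_pow_of_le_one (by norm_num) (by norm_num) (by omega)
    nlinarith [pow_nonneg h0 (k - j + 1), Finset.sum_nonneg
      (fun i (_ : i ∈ Finset.range j) => pow_nonneg h0 i)]
  have hW := weierstrass (fun i => r ^ (k - i)) (fun i => pow_nonneg h0 _)
    (fun i => by
      calc r ^ (k - i) ≤ (1/2:ℝ) ^ (k - i) := pow_le_pow_left₀ h0 h2 _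
        _ ≤ 1 := by
          apply pow_le_one₀ <;> norm_num) j
  linarith

lemma prodP {r : ℝ} (h0 : 0 ≤ r) (h2 : r ≤ 1/2) (j k : ℕ) (hjk : j ≤ k) :
    (1/4 : ℝ) ≤ ∏ i ∈ Finset.range j, (1 - r ^ (k - i)) := by
  rcases Nat.lt_or_ge j k with h | h
  · linarith [subP h0 h2 j k (by omega)]
  · have hjk' : j = k := by omega
    subst hjk'
    rcases Nat.eq_zero_or_pos j with rfl | hj
    · norm_num
    · obtain ⟨k', rfl⟩ : ∃ k', j = k' + 1 := ⟨j - 1, by omega⟩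
      rw [Finset.prod_range_succ]
      have h1 := subP h0 h2 k' (k' + 1) (by omega)
      have h2'' : (1 : ℝ) - r ^ (k' + 1 - k') = 1 - r := by
        rw [show k' + 1 - k' = 1 from by omega, pow_one]
      rw [h2'']
      have hle : ∀ i ∈ Finset.range k', (0:ℝ) ≤ 1 - r ^ (k' + 1 - i) := by
        intro i hi
        have : r ^ (k' + 1 - i) ≤ 1 := by
          calc r ^ (k' + 1 - i) ≤ (1/2:ℝ) ^ (k' + 1 - i) := pow_le_pow_left₀ h0 h2 _
            _ ≤ 1 := by apply pow_le_one₀ <;> norm_num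
        linarith
      nlinarith [Finset.prod_nonneg hle]

lemma prod_q_lower {q : ℕ} (hq : 2 ≤ q) (j k : ℕ) (hjk : j ≤ k) :
    (q:ℝ)^(k*j) / 4 ≤ ((∏ i : Fin j, (q^k - q^(i:ℕ)) : ℕ) : ℝ) := by
  have hq0 : (0:ℝ) < (q:ℝ) := by positivity
  have hq2 : (2:ℝ) ≤ (q:ℝ) := by exact_mod_cast hq
  have hr0 : (0:ℝ) ≤ (q:ℝ)⁻¹ := by positivity
  have hr2 : (q:ℝ)⁻¹ ≤ 1/2 := by
    rw [show (1/2:ℝ) = (2:ℝ)⁻¹ by norm_num]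
    gcongr
  have hcast : ((∏ i : Fin j, (q^k - q^(i:ℕ)) : ℕ) : ℝ) =
      ∏ i ∈ Finset.range j, ((q:ℝ)^k - (q:ℝ)^i) := by
    rw [Fin.prod_univ_eq_prod_range (fun i => q^k - q^i) j, Nat.cast_prod]
    apply Finset.prod_congr rfl
    intro i hi
    simp only [Finset.mem_range] at hi
    have hik : q^i ≤ q^k := Nat.pow_le_pow_right (by omega) (by omega)
    push_cast [Nat.cast_sub hik]
    ring
  rw [hcast]
  have hfac : ∀ i ∈ Finset.range j, ((q:ℝ)^k - (q:ℝ)^i) =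
      (q:ℝ)^k * (1 - ((q:ℝ)⁻¹) ^ (k - i)) := by
    intro i hi
    simp only [Finset.mem_range] at hi
    have hik : i + (k - i) = k := by omega
    have hpow : (q:ℝ)^k * ((q:ℝ)⁻¹)^(k-i) = (q:ℝ)^i := by
      rw [inv_pow, ← hik, pow_add]
      field_simp
      rw [Nat.add_sub_cancel_left]
    rw [mul_sub, mul_one, hpow]
  rw [Finset.prod_congr rfl hfac, Finset.prod_mul_distrib, Finset.prod_const,
    Finset.card_range, ← pow_mul]
  have hP := prodP hr0 hr2 j k hjk
  have hp : (0:ℝ) < (q:ℝ)^(k*j) := by positivity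
  calc (q:ℝ)^(k*j)/4 = (q:ℝ)^(k*j) * (1/4) := by ring
    _ ≤ (q:ℝ)^(k*j) * ∏ i ∈ Finset.range j, (1 - ((q:ℝ)⁻¹)^(k-i)) := by
        exact mul_le_mul_of_nonneg_left hP (le_of_lt hp)


lemma telescope (g : ℕ → ℝ) (n : ℕ) :
    ∑ i ∈ Finset.Icc 1 n, (i:ℝ) * (g (i-1) - g i) =
      (∑ j ∈ Finset.range n, g j) - n * g n := by
  induction n with
  | zero => simp
  | succ k ih =>
    rw [Finset.sum_Icc_succ_top (by omega), ih, Finset.sum_range_succ]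
    simp only [Nat.add_sub_cancel]
    push_cast
    ring

lemma exp_ge_sq {y : ℝ} (hy : 0 ≤ y) : y^2/4 ≤ Real.exp y := by
  have h := Real.add_one_le_exp (y/2)
  have h2 : Real.exp (y/2) * Real.exp (y/2) = Real.exp y := by
    rw [← Real.exp_add]; ring_nf
  nlinarith [Real.exp_pos (y/2)]

end Support


/-- Average minimum rank distance of random codes. -/
theorem stmt12 (q : ℕ) (F : Type*) [Field F] [Fintype F] (hq : Fintype.card F = q)
    (α : ℝ) (hα0 : 0 < α) (hα1 : α < 1) (m N : ℕ → ℕ)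
    (hm : ∀ n, 2 ≤ n → n ≤ m n) (hN2 : ∀ n, 2 ≤ n → 2 ≤ N n)
    (hNlow : ∀ n : ℕ, 2 ≤ n → 3 * Real.logb q (n : ℝ) * (q : ℝ) ^ ((m n + n : ℕ)) ≤ (N n : ℝ))
    (hNhigh : ∀ n : ℕ, 2 ≤ n → (N n : ℝ) ≤ (q : ℝ) ^ (α * (m n : ℝ) * n)) :
    ∃ C : ℝ, 0 < C ∧ ∃ n₀ : ℕ, ∀ n ≥ n₀,
      |(∑ i ∈ Finset.Icc 1 n, (i : ℝ) *
          ((1 - (ballCount F (m n) n (i - 1) : ℝ) / (q : ℝ) ^ (m n * n)) ^ (N n) -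
            (1 - (ballCount F (m n) n i : ℝ) / (q : ℝ) ^ (m n * n)) ^ (N n))) -
        (((m n : ℝ) + n) / 2 -
          Real.sqrt (((m n : ℝ) - n) ^ 2 / 4 + Real.logb q (N n)))| ≤ C := by
  classical
  refine ⟨100, by norm_num, max 4096 (q + 2), ?_⟩
  intro n hn
  have hn4096 : 4096 ≤ n := le_trans (le_max_left _ _) hn
  have hnq : q + 2 ≤ n := le_trans (le_max_right _ _) hn
  have hn2 : 2 ≤ n := by omega
  have hq2 : 2 ≤ q := by
    rw [← hq]; exact Fintype.one_lt_card
  set mm := m n with hmm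
  have hmn : n ≤ mm := hm n hn2
  set NN := N n with hNNdef
  have hNN2 : 2 ≤ NN := hN2 n hn2
  have hx2 : (2:ℝ) ≤ (q:ℝ) := by exact_mod_cast hq2
  have hx0 : (0:ℝ) < (q:ℝ) := by linarith
  have hx1 : (1:ℝ) < (q:ℝ) := by linarith
  have hnR : (4096:ℝ) ≤ (n:ℝ) := by exact_mod_cast hn4096
  have hn0 : (0:ℝ) < (n:ℝ) := by linarith
  have hmnR : (n:ℝ) ≤ (mm:ℝ) := by exact_mod_cast hmn
  set Q : ℝ := (q:ℝ) ^ (mm * n) with hQdef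
  have hQpos : 0 < Q := by positivity
  set L : ℝ := Real.logb q NN with hLdef
  set w : ℝ := Real.sqrt (((mm:ℝ) - n) ^ 2 / 4 + L) with hwdef
  set d : ℝ := ((mm:ℝ) + n) / 2 - w with hddef
  set f : ℕ → ℝ := fun j => (1 - (ballCount F mm n j : ℝ) / Q) ^ NN with hfdef
  -- counting facts
  have hcardMat : Nat.card (Matrix (Fin mm) (Fin n) F) = q ^ (mm * n) := by
    rw [Nat.card_eq_fintype_card]
    show Fintype.card (Fin mm → Fin n → F) = _
    simp only [Fintype.card_fun, Fintype.card_fin, ← pow_mul, hq]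
    rw [mul_comm]
  have hBleQ : ∀ j : ℕ, (ballCount F mm n j : ℝ) ≤ Q := by
    intro j
    have h1 : ballCount F mm n j ≤ q ^ (mm * n) := by
      rw [← hcardMat]
      exact Nat.card_le_card_of_injective Subtype.val Subtype.val_injective
    calc (ballCount F mm n j : ℝ) ≤ ((q ^ (mm*n) : ℕ) : ℝ) := by exact_mod_cast h1
      _ = Q := by rw [hQdef]; push_cast; rfl
  have hB0 : ∀ j : ℕ, (0:ℝ) ≤ (ballCount F mm n j : ℝ) := fun j => Nat.cast_nonneg _
  have hbase0 : ∀ j : ℕ, (0:ℝ) ≤ 1 - (ballCount F mm n j : ℝ) / Q := fun j => by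
    rw [sub_nonneg]; exact div_le_one_of_le₀ (hBleQ j) (le_of_lt hQpos)
  have hbase1 : ∀ j : ℕ, 1 - (ballCount F mm n j : ℝ) / Q ≤ 1 := fun j => by
    have : 0 ≤ (ballCount F mm n j : ℝ) / Q := div_nonneg (hB0 j) (le_of_lt hQpos)
    linarith
  have hf0 : ∀ j, 0 ≤ f j := fun j => pow_nonneg (hbase0 j) _
  have hf1 : ∀ j, f j ≤ 1 := fun j => pow_le_one₀ (hbase0 j) (hbase1 j)
  have hfn : f n = 0 := by
    have hBn : (ballCount F mm n n : ℝ) = Q := by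
      have h1 : ballCount F mm n n = q ^ (mm * n) := by
        rw [ballCount, ← hcardMat]
        exact Nat.card_congr (Equiv.subtypeUnivEquiv (fun A => Matrix.rank_le_width A))
      rw [h1, hQdef]; push_cast; rfl
    rw [hfdef]
    simp only [hBn, div_self (ne_of_gt hQpos), sub_self]
    exact zero_pow (by omega)
  -- logarithm facts
  have hNpos : (0:ℝ) < (NN:ℝ) := by exact_mod_cast (by omega : 0 < NN)
  have hNL : (q:ℝ) ^ L = (NN:ℝ) := Real.rpow_logb hx0 (by linarith) hNpos
  have hlogn : 1 ≤ Real.logb q n := by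
    have h1 : Real.logb q q ≤ Real.logb q n :=
      Real.logb_le_logb_of_le hx1 hx0 (by exact_mod_cast (by omega : q ≤ n))
    rwa [Real.logb_self_eq_one hx1] at h1
  have hLlow : ((mm:ℝ) + n) ≤ L := by
    have hqpow : (0:ℝ) < (q:ℝ) ^ ((mm + n : ℕ)) := by positivity
    have hNge : (q:ℝ) ^ ((mm + n : ℕ)) ≤ (NN:ℝ) := by
      have := hNlow n hn2
      nlinarith [this, hqpow, hlogn]
    have h1 : Real.logb q ((q:ℝ) ^ ((mm+n : ℕ))) ≤ L :=
      Real.logb_le_logb_of_le hx1 hqpow hNge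
    rwa [show ((q:ℝ) ^ ((mm+n:ℕ))) = (q:ℝ) ^ (((mm+n:ℕ)):ℝ) from (Real.rpow_natCast _ _).symm,
      Real.logb_rpow (by positivity) (by linarith : (q:ℝ) ≠ 1), Nat.cast_add] at h1
  have hLhigh : L ≤ α * mm * n := by
    have h1 : Real.logb q (NN:ℝ) ≤ Real.logb q ((q:ℝ) ^ (α * (mm:ℝ) * n)) :=
      Real.logb_le_logb_of_le hx1 hNpos (hNhigh n hn2)
    rwa [Real.logb_rpow (by positivity) (by linarith)] at h1
  have hmmpos : (0:ℝ) < (mm:ℝ) := by linarith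
  have hLltmn : L < (mm:ℝ) * n := by nlinarith
  have hLpos : 0 < L := by linarith
  -- sqrt facts
  have harg0 : 0 ≤ ((mm:ℝ) - n)^2/4 + L := by positivity
  have hw2 : w^2 = ((mm:ℝ) - n)^2/4 + L := Real.sq_sqrt harg0
  have hw0 : 0 ≤ w := Real.sqrt_nonneg _
  have hsL0 : 0 ≤ Real.sqrt L := Real.sqrt_nonneg L
  have hsL2 : Real.sqrt L ^ 2 = L := Real.sq_sqrt (le_of_lt hLpos)
  have hwge : Real.sqrt L ≤ w := by
    rw [hwdef]
    apply Real.sqrt_le_sqrt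
    nlinarith [sq_nonneg ((mm:ℝ) - n)]
  have hwgemn : ((mm:ℝ) - n)/2 ≤ w := by nlinarith
  have hdn : d ≤ (n:ℝ) := by rw [hddef]; linarith
  have hd0 : 0 < d := by
    rw [hddef]
    nlinarith
  have gid : ∀ u : ℝ, L + u*((mm:ℝ) + n - u) - (mm:ℝ)*n = (u - d)*(((mm:ℝ) + n - d) - u) := by
    intro u
    rw [hddef]
    nlinarith [hw2]
  -- power lower bound
  have hpow_big : (n:ℝ)/8 ≤ (q:ℝ) ^ Real.sqrt L := by
    have h2L : (2:ℝ) ^ Real.sqrt L ≤ (q:ℝ) ^ Real.sqrt L :=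
      Real.rpow_le_rpow (by norm_num) hx2 hsL0
    have hexp : (2:ℝ) ^ Real.sqrt L = Real.exp (Real.log 2 * Real.sqrt L) :=
      Real.rpow_def_of_pos (by norm_num) _
    have hlog2 : (1/2:ℝ) ≤ Real.log 2 := by
      have := Real.log_two_gt_d9; linarith
    have hlog2' : (0:ℝ) ≤ Real.log 2 * Real.sqrt L := by positivity
    have hsq := exp_ge_sq hlog2'
    have hL2n : 2*(n:ℝ) ≤ L := by linarith
    have hq14 : (1/4:ℝ) ≤ (Real.log 2)^2 := by nlinarith [hlog2]
    calc (n:ℝ)/8 ≤ L/16 := by linarith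
      _ ≤ (Real.log 2 * Real.sqrt L)^2/4 := by
          rw [mul_pow, hsL2]
          nlinarith [mul_nonneg (by linarith : (0:ℝ) ≤ (Real.log 2)^2 - 1/4) hLpos.le]
      _ ≤ Real.exp (Real.log 2 * Real.sqrt L) := hsq
      _ = (2:ℝ) ^ Real.sqrt L := hexp.symm
      _ ≤ (q:ℝ) ^ Real.sqrt L := h2L
  have hexp_small : Real.exp (-((q:ℝ) ^ Real.sqrt L / 4)) ≤ (n:ℝ)⁻¹ := by
    have h1 : (n:ℝ) ≤ Real.exp ((n:ℝ)/32) := by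
      have hh := exp_ge_sq (y := (n:ℝ)/32) (by positivity)
      have ha : (n:ℝ) ≤ ((n:ℝ)/32)^2/4 := by
        nlinarith [mul_nonneg (by linarith : (0:ℝ) ≤ (n:ℝ) - 4096) hn0.le]
      linarith
    have h2 : (n:ℝ)/32 ≤ (q:ℝ) ^ Real.sqrt L / 4 := by linarith
    have h3 : (n:ℝ) ≤ Real.exp ((q:ℝ) ^ Real.sqrt L / 4) :=
      le_trans h1 (Real.exp_le_exp.mpr h2)
    rw [Real.exp_neg]
    exact inv_anti₀ hn0 h3
  -- B bounds in real form
  have hQr : Q = (q:ℝ) ^ ((mm:ℝ) * (n:ℝ)) := by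
    rw [hQdef, ← Real.rpow_natCast (q:ℝ) (mm*n)]
    congr 1
    push_cast; ring
  have hBlow : ∀ j : ℕ, j ≤ n → (q:ℝ) ^ ((j:ℝ)*((mm:ℝ) + n - j)) / 4 ≤ (ballCount F mm n j : ℝ) := by
    intro j hj
    have h1 := ballCount_lower (F := F) mm n j (le_trans hj hmn) hj
    rw [hq] at h1
    have h2 := prod_q_lower hq2 j mm (le_trans hj hmn)
    have h3 : ((q:ℝ)^(mm*j)/4) * (q:ℝ)^(j*(n-j)) ≤ (ballCount F mm n j : ℝ) := by
      calc ((q:ℝ)^(mm*j)/4) * (q:ℝ)^(j*(n-j))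
          ≤ ((∏ i : Fin j, (q^mm - q^(i:ℕ)) : ℕ) : ℝ) * (q:ℝ)^(j*(n-j)) := by
            apply mul_le_mul_of_nonneg_right h2 (by positivity)
        _ = (((∏ i : Fin j, (q^mm - q^(i:ℕ))) * q^(j*(n-j)) : ℕ) : ℝ) := by push_cast; ring
        _ ≤ (ballCount F mm n j : ℝ) := by exact_mod_cast h1
    calc (q:ℝ) ^ ((j:ℝ)*((mm:ℝ) + n - j)) / 4
        = ((q:ℝ)^(mm*j)/4) * (q:ℝ)^(j*(n-j)) := by
          rw [← Real.rpow_natCast (q:ℝ) (mm*j), ← Real.rpow_natCast (q:ℝ) (j*(n-j)),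
            div_mul_eq_mul_div, ← Real.rpow_add hx0]
          congr 2
          push_cast [Nat.cast_sub hj]
          ring
      _ ≤ (ballCount F mm n j : ℝ) := h3
  have hBup : ∀ j : ℕ, j ≤ n → (ballCount F mm n j : ℝ) ≤ 4 * (q:ℝ) ^ ((j:ℝ)*((mm:ℝ) + n - j)) := by
    intro j hj
    have h1 := ballCount_upper (F := F) mm n j hj
    rw [hq] at h1
    have h2 := prod_q_lower hq2 j j le_rfl
    have hBC0 : (0:ℝ) ≤ (ballCount F mm n j : ℝ) := hB0 j
    have h3 : (ballCount F mm n j : ℝ) * ((q:ℝ)^(j*j)/4) ≤ (q:ℝ)^(mm*j) * (q:ℝ)^(n*j) := by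
      calc (ballCount F mm n j : ℝ) * ((q:ℝ)^(j*j)/4)
          ≤ (ballCount F mm n j : ℝ) * ((∏ i : Fin j, (q^j - q^(i:ℕ)) : ℕ) : ℝ) :=
            mul_le_mul_of_nonneg_left h2 hBC0
        _ = ((ballCount F mm n j * ∏ i : Fin j, (q^j - q^(i:ℕ)) : ℕ) : ℝ) := by push_cast; ring
        _ ≤ (((q:ℕ)^(mm*j) * (q:ℕ)^(n*j) : ℕ) : ℝ) := by
            exact_mod_cast h1
        _ = (q:ℝ)^(mm*j) * (q:ℝ)^(n*j) := by push_cast; ring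
    have hpjj : (0:ℝ) < (q:ℝ)^(j*j) := by positivity
    have h4 : (ballCount F mm n j : ℝ) ≤ 4 * ((q:ℝ)^(mm*j) * (q:ℝ)^(n*j)) / (q:ℝ)^(j*j) := by
      rw [le_div_iff₀ hpjj]
      linarith [h3]
    have h5 : 4 * ((q:ℝ)^(mm*j) * (q:ℝ)^(n*j)) / (q:ℝ)^(j*j) =
        4 * (q:ℝ) ^ ((j:ℝ)*((mm:ℝ) + n - j)) := by
      rw [← Real.rpow_natCast (q:ℝ) (mm*j), ← Real.rpow_natCast (q:ℝ) (n*j),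
        ← Real.rpow_natCast (q:ℝ) (j*j), ← Real.rpow_add hx0,
        mul_div_assoc, ← Real.rpow_sub hx0]
      congr 2
      push_cast
      ring
    linarith
  -- key per-term bounds
  have hKey_low : ∀ j : ℕ, j ≤ n →
      (q:ℝ) ^ (((j:ℝ) - d)*(((mm:ℝ) + n - d) - j)) / 4 ≤ (NN:ℝ) * ((ballCount F mm n j : ℝ) / Q) := by
    intro j hj
    have h1 := hBlow j hj
    have e1 : (q:ℝ)^L * ((q:ℝ)^((j:ℝ)*((mm:ℝ) + n - j)) / 4) / (q:ℝ)^((mm:ℝ)*(n:ℝ))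
        = (q:ℝ) ^ (L + (j:ℝ)*((mm:ℝ) + n - j) - (mm:ℝ)*n) / 4 := by
      rw [Real.rpow_sub hx0, Real.rpow_add hx0]
      ring
    calc (q:ℝ) ^ (((j:ℝ) - d)*(((mm:ℝ) + n - d) - j)) / 4
        = (q:ℝ) ^ (L + (j:ℝ)*((mm:ℝ) + n - j) - (mm:ℝ)*n) / 4 := by rw [gid (j:ℝ)]
      _ = (q:ℝ)^L * ((q:ℝ)^((j:ℝ)*((mm:ℝ) + n - j)) / 4) / (q:ℝ)^((mm:ℝ)*(n:ℝ)) := e1.symm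
      _ ≤ (q:ℝ)^L * (ballCount F mm n j : ℝ) / (q:ℝ)^((mm:ℝ)*(n:ℝ)) := by gcongr
      _ = (NN:ℝ) * ((ballCount F mm n j : ℝ) / Q) := by rw [hNL, hQr]; ring
  have hKey_up : ∀ j : ℕ, j ≤ n →
      (NN:ℝ) * ((ballCount F mm n j : ℝ) / Q) ≤ 4 * (q:ℝ) ^ (((j:ℝ) - d)*(((mm:ℝ) + n - d) - j)) := by
    intro j hj
    have h1 := hBup j hj
    have e1 : (q:ℝ)^L * (4 * (q:ℝ)^((j:ℝ)*((mm:ℝ) + n - j))) / (q:ℝ)^((mm:ℝ)*(n:ℝ))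
        = 4 * (q:ℝ) ^ (L + (j:ℝ)*((mm:ℝ) + n - j) - (mm:ℝ)*n) := by
      rw [Real.rpow_sub hx0, Real.rpow_add hx0]
      ring
    calc (NN:ℝ) * ((ballCount F mm n j : ℝ) / Q)
        = (q:ℝ)^L * (ballCount F mm n j : ℝ) / (q:ℝ)^((mm:ℝ)*(n:ℝ)) := by rw [hNL, hQr]; ring
      _ ≤ (q:ℝ)^L * (4 * (q:ℝ)^((j:ℝ)*((mm:ℝ) + n - j))) / (q:ℝ)^((mm:ℝ)*(n:ℝ)) := by gcongr
      _ = 4 * (q:ℝ) ^ (L + (j:ℝ)*((mm:ℝ) + n - j) - (mm:ℝ)*n) := e1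
      _ = 4 * (q:ℝ) ^ (((j:ℝ) - d)*(((mm:ℝ) + n - d) - j)) := by rw [gid (j:ℝ)]
  set D := Nat.floor d with hDdef
  have hDd : (D:ℝ) ≤ d := Nat.floor_le (le_of_lt hd0)
  have hdD1 : d < (D:ℝ) + 1 := Nat.lt_floor_add_one d
  have hDn : D ≤ n := by
    have : (D:ℝ) ≤ (n:ℝ) := le_trans hDd hdn
    exact_mod_cast this
  -- tail bound
  have htail : ∀ j : ℕ, j < n → D + 2 ≤ j → f j ≤ (n:ℝ)⁻¹ := by
    intro j hjn hj2
    have hjR : (j:ℝ) ≤ (n:ℝ) := by exact_mod_cast le_of_lt hjn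
    have hj1 : (1:ℝ) ≤ (j:ℝ) - d := by
      have : ((D:ℝ)) + 2 ≤ (j:ℝ) := by exact_mod_cast hj2
      linarith
    have hj3 : Real.sqrt L ≤ ((mm:ℝ) + n - d) - j := by
      have hmd : w ≤ (mm:ℝ) - d := by rw [hddef]; linarith
      linarith [hwge]
    have hgj : Real.sqrt L ≤ ((j:ℝ) - d)*(((mm:ℝ) + n - d) - j) := by nlinarith
    have h6 := hKey_low j (le_of_lt hjn)
    have h7 : (q:ℝ) ^ Real.sqrt L / 4 ≤ (NN:ℝ) * ((ballCount F mm n j : ℝ) / Q) := by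
      have hmono := Real.rpow_le_rpow_of_exponent_le (by linarith : (1:ℝ) ≤ (q:ℝ)) hgj
      linarith [h6]
    have h8 : f j ≤ Real.exp (-((NN:ℝ) * ((ballCount F mm n j : ℝ) / Q))) := by
      have hb1 : (1:ℝ) - (ballCount F mm n j : ℝ) / Q ≤ Real.exp (-((ballCount F mm n j : ℝ) / Q)) := by
        have := Real.add_one_le_exp (-((ballCount F mm n j : ℝ) / Q)); linarith
      rw [hfdef]
      calc (1 - (ballCount F mm n j : ℝ) / Q)^NN
          ≤ (Real.exp (-((ballCount F mm n j : ℝ)/Q)))^NN := pow_le_pow_left₀ (hbase0 j) hb1 NN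
        _ = Real.exp (-((NN:ℝ) * ((ballCount F mm n j : ℝ) / Q))) := by
            rw [← Real.exp_nat_mul]; ring_nf
    calc f j ≤ Real.exp (-((NN:ℝ) * ((ballCount F mm n j : ℝ) / Q))) := h8
      _ ≤ Real.exp (-((q:ℝ) ^ Real.sqrt L / 4)) := by
          apply Real.exp_le_exp.mpr; linarith
      _ ≤ (n:ℝ)⁻¹ := hexp_small
  -- head bound
  have hhead : ∀ j : ℕ, j < D → 1 - 32*(n:ℝ)⁻¹ ≤ f j := by
    intro j hjD
    have hjn' : j ≤ n := by omega
    have hjR : (j:ℝ) ≤ (n:ℝ) := by exact_mod_cast hjn'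
    have hjd : (j:ℝ) - d ≤ -1 := by
      have : ((j:ℝ)) + 1 ≤ (D:ℝ) := by exact_mod_cast hjD
      linarith
    have hj3 : Real.sqrt L ≤ ((mm:ℝ) + n - d) - j := by
      have hmd : w ≤ (mm:ℝ) - d := by rw [hddef]; linarith
      linarith [hwge]
    have hgj : ((j:ℝ) - d)*(((mm:ℝ) + n - d) - j) ≤ -Real.sqrt L := by nlinarith
    have h6 := hKey_up j hjn'
    have h7 : (NN:ℝ) * ((ballCount F mm n j : ℝ) / Q) ≤ 32 * (n:ℝ)⁻¹ := by
      have ha : (q:ℝ) ^ (((j:ℝ) - d)*(((mm:ℝ) + n - d) - j)) ≤ (q:ℝ) ^ (-Real.sqrt L) :=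
        Real.rpow_le_rpow_of_exponent_le (by linarith) hgj
      have hb : (q:ℝ) ^ (-Real.sqrt L) = ((q:ℝ) ^ Real.sqrt L)⁻¹ := Real.rpow_neg (by linarith) _
      have hc : ((q:ℝ) ^ Real.sqrt L)⁻¹ ≤ ((n:ℝ)/8)⁻¹ := by
        apply inv_anti₀ (by linarith) hpow_big
      have hd8 : ((n:ℝ)/8)⁻¹ = 8 * (n:ℝ)⁻¹ := by field_simp
      calc (NN:ℝ) * ((ballCount F mm n j : ℝ) / Q)
          ≤ 4 * (q:ℝ) ^ (((j:ℝ) - d)*(((mm:ℝ) + n - d) - j)) := h6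
        _ ≤ 4 * (8 * (n:ℝ)⁻¹) := by
            rw [← hd8]
            have := le_trans ha (le_of_eq hb)
            exact mul_le_mul_of_nonneg_left (le_trans this hc) (by norm_num)
        _ = 32 * (n:ℝ)⁻¹ := by ring
    have h8 : 1 - (NN:ℝ) * ((ballCount F mm n j : ℝ) / Q) ≤ f j := by
      have hm2 : (-2:ℝ) ≤ -((ballCount F mm n j : ℝ) / Q) := by
        have h01 : (ballCount F mm n j : ℝ)/Q ≤ 1 := by
          have := hbase0 j; linarith
        linarith
      have := one_add_mul_le_pow hm2 NN
      rw [mul_neg, ← sub_eq_add_neg, ← sub_eq_add_neg] at this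
      rw [hfdef]
      exact this
    linarith
  -- summations
  have hup : ∑ j ∈ Finset.range n, f j ≤ d + 3 := by
    have hsplit : ∀ j ∈ Finset.range n, f j ≤ (if j < D + 2 then 1 else (n:ℝ)⁻¹) := by
      intro j hj
      simp only [Finset.mem_range] at hj
      by_cases h : j < D + 2
      · rw [if_pos h]; exact hf1 j
      · rw [if_neg h]; exact htail j hj (by omega)
    calc ∑ j ∈ Finset.range n, f j
        ≤ ∑ j ∈ Finset.range n, (if j < D + 2 then 1 else (n:ℝ)⁻¹) :=
          Finset.sum_le_sum hsplit
      _ = ∑ j ∈ (Finset.range n).filter (fun j => j < D + 2), (1:ℝ) +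
          ∑ j ∈ (Finset.range n).filter (fun j => ¬ j < D + 2), (n:ℝ)⁻¹ :=
          Finset.sum_ite _ _
      _ ≤ (D + 2 : ℕ) + 1 := by
          have hc1 : ((Finset.range n).filter (fun j => j < D + 2)).card ≤ D + 2 := by
            calc ((Finset.range n).filter (fun j => j < D + 2)).card
                ≤ (Finset.range (D+2)).card := Finset.card_le_card (by
                  intro x hx
                  simp only [Finset.mem_filter, Finset.mem_range] at hx ⊢
                  omega)
              _ = D + 2 := Finset.card_range _
          have hc2 : ((Finset.range n).filter (fun j => ¬ j < D + 2)).card ≤ n :=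
            le_trans (Finset.card_le_card (Finset.filter_subset _ _)) (le_of_eq (Finset.card_range n))
          rw [Finset.sum_const, Finset.sum_const]
          have e1 : (((Finset.range n).filter (fun j => j < D + 2)).card : ℝ) ≤ (D + 2 : ℕ) := by
            exact_mod_cast hc1
          have e2 : (((Finset.range n).filter (fun j => ¬ j < D + 2)).card : ℝ) * (n:ℝ)⁻¹ ≤ 1 := by
            have : (((Finset.range n).filter (fun j => ¬ j < D + 2)).card : ℝ) ≤ (n:ℝ) := by
              exact_mod_cast hc2
            rw [← mul_inv_cancel₀ (ne_of_gt hn0)]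
            exact mul_le_mul_of_nonneg_right this (by positivity)
          simp only [nsmul_eq_mul, mul_one]
          linarith
      _ ≤ d + 3 := by
          push_cast
          linarith
  have hlo : d - 33 ≤ ∑ j ∈ Finset.range n, f j := by
    have hsub : Finset.range D ⊆ Finset.range n := Finset.range_subset_range.mpr hDn
    have h1 : ∑ j ∈ Finset.range D, f j ≤ ∑ j ∈ Finset.range n, f j :=
      Finset.sum_le_sum_of_subset_of_nonneg hsub (fun j _ _ => hf0 j)
    have h2 : (D:ℝ)*(1 - 32*(n:ℝ)⁻¹) ≤ ∑ j ∈ Finset.range D, f j := by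
      calc (D:ℝ)*(1 - 32*(n:ℝ)⁻¹) = ∑ _j ∈ Finset.range D, (1 - 32*(n:ℝ)⁻¹) := by
            rw [Finset.sum_const, Finset.card_range, nsmul_eq_mul]
        _ ≤ ∑ j ∈ Finset.range D, f j := Finset.sum_le_sum (fun j hj =>
            hhead j (Finset.mem_range.mp hj))
    have hDn' : (D:ℝ) ≤ (n:ℝ) := by exact_mod_cast hDn
    have h3 : (D:ℝ) - 32 ≤ (D:ℝ)*(1 - 32*(n:ℝ)⁻¹) := by
      have hD0 : (0:ℝ) ≤ (D:ℝ) := Nat.cast_nonneg _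
      have h4 : (D:ℝ)*(32*(n:ℝ)⁻¹) ≤ (n:ℝ)*(32*(n:ℝ)⁻¹) :=
        mul_le_mul_of_nonneg_right hDn' (by positivity)
      have h5 : (n:ℝ)*(32*(n:ℝ)⁻¹) = 32 := by field_simp
      nlinarith
    linarith
  -- conclude
  have htel := telescope f n
  rw [hfn, mul_zero, sub_zero] at htel
  rw [show (∑ i ∈ Finset.Icc 1 n, (i : ℝ) *
          ((1 - (ballCount F mm n (i - 1) : ℝ) / Q) ^ NN -
            (1 - (ballCount F mm n i : ℝ) / Q) ^ NN)) =
      ∑ i ∈ Finset.Icc 1 n, (i:ℝ) * (f (i-1) - f i) from rfl, htel]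
  rw [abs_le]
  constructor
  · linarith
  · linarith
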